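/- Let C(θ; d) = P_θ(D ≥ d) be the confidence distribution based on a continuous statistic D whose (1-α)-quantile q_α(θ) is strictly increasing and continuous in θ. Then C(·; d) has no point mass (i.e., lim_{θ→θ_L} C(θ; d) = 0 and lim_{θ→θ_U} C(θ; d) = 1 for all d in the interior of the sample space) if and only if for every α ∈ (0,1), q_α(θ) converges to the boundary of the sample space Ω_D as θ converges to the corresponding boundary of the parameter space Θ. -/
import Mathlib


open Set Filter Topology

/-- Point-mass theorem (iff).  Let `C(θ; d) = 1 - F θ d` be the confidence
distribution based on a continuous statistic `D` with CDF `F θ`, strictly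
increasing on the sample space `Ω_D = (Dl, Du)`, and `(1-α)`-quantile
`q α θ` (so `F θ (q α θ) = 1 - α`), continuous and strictly increasing in
`θ ∈ Θ = (θl, θu)`.  Then `C(·; d)` has no point mass (its limits at the
parameter-space boundary are `0` and `1` for every interior `d`) if and only
if for every `α ∈ (0,1)` the quantile `q α θ` converges to the corresponding
boundary of the sample space as `θ` converges to the boundary of `Θ`. -/
theorem no_point_mass_iff_quantile_to_boundary
    (θl θu Dl Du : ℝ) (hΘ : θl < θu) (hΩ : Dl < Du)
    (F : ℝ → ℝ → ℝ) (q : ℝ → ℝ → ℝ)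
    (hFmono : ∀ θ ∈ Ioo θl θu, StrictMonoOn (F θ) (Ioo Dl Du))
    (hFcont : ∀ θ ∈ Ioo θl θu, ContinuousOn (F θ) (Ioo Dl Du))
    (hFrange : ∀ θ ∈ Ioo θl θu, ∀ d ∈ Ioo Dl Du, F θ d ∈ Icc (0 : ℝ) 1)
    (hq : ∀ α ∈ Ioo (0 : ℝ) 1, ∀ θ ∈ Ioo θl θu,
      q α θ ∈ Ioo Dl Du ∧ F θ (q α θ) = 1 - α)
    (hqmono : ∀ α ∈ Ioo (0 : ℝ) 1, StrictMonoOn (q α) (Ioo θl θu))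
    (hqcont : ∀ α ∈ Ioo (0 : ℝ) 1, ContinuousOn (q α) (Ioo θl θu)) :
    (∀ d ∈ Ioo Dl Du,
        Tendsto (fun θ => 1 - F θ d) (𝓝[>] θl) (𝓝 0) ∧
        Tendsto (fun θ => 1 - F θ d) (𝓝[<] θu) (𝓝 1)) ↔
      (∀ α ∈ Ioo (0 : ℝ) 1,
        Tendsto (q α) (𝓝[>] θl) (𝓝 Dl) ∧
        Tendsto (q α) (𝓝[<] θu) (𝓝 Du)) := by
  have hIooL : Ioo θl θu ∈ 𝓝[>] θl := Ioo_mem_nhdsGT_of_mem ⟨le_refl _, hΘ⟩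
  have hIooU : Ioo θl θu ∈ 𝓝[<] θu := Ioo_mem_nhdsLT_of_mem ⟨hΘ, le_refl _⟩
  constructor
  · intro hC α hα
    obtain ⟨hα0, hα1⟩ := hα
    constructor
    · -- q α θ → Dl as θ → θl⁺
      rw [tendsto_order]
      constructor
      · intro c hc
        filter_upwards [hIooL] with θ hθ
        exact lt_trans hc ((hq α ⟨hα0, hα1⟩ θ hθ).1.1)
      · intro c hc
        by_cases hcD : c < Du
        · -- F θ c → 1
          have h1 : Tendsto (fun θ => F θ c) (𝓝[>] θl) (𝓝 1) := by
            have := (tendsto_const_nhds (x := (1:ℝ)) (f := 𝓝[>] θl)).sub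
              (hC c ⟨hc, hcD⟩).1
            simpa using this
          have h2 : ∀ᶠ θ in 𝓝[>] θl, 1 - α < F θ c :=
            h1.eventually_const_lt (by linarith)
          filter_upwards [hIooL, h2] with θ hθ hlt
          have hqd := hq α ⟨hα0, hα1⟩ θ hθ
          have : F θ (q α θ) < F θ c := by rw [hqd.2]; exact hlt
          exact ((hFmono θ hθ).lt_iff_lt hqd.1 ⟨hc, hcD⟩).1 this
        · filter_upwards [hIooL] with θ hθ
          exact lt_of_lt_of_le (hq α ⟨hα0, hα1⟩ θ hθ).1.2 (not_lt.1 hcD)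
    · -- q α θ → Du as θ → θu⁻
      rw [tendsto_order]
      constructor
      · intro c hc
        by_cases hcD : Dl < c
        · have h1 : Tendsto (fun θ => F θ c) (𝓝[<] θu) (𝓝 0) := by
            have := (tendsto_const_nhds (x := (1:ℝ)) (f := 𝓝[<] θu)).sub
              (hC c ⟨hcD, hc⟩).2
            simpa using this
          have h2 : ∀ᶠ θ in 𝓝[<] θu, F θ c < 1 - α :=
            h1.eventually_lt_const (by linarith)
          filter_upwards [hIooU, h2] with θ hθ hlt
          have hqd := hq α ⟨hα0, hα1⟩ θ hθ
          have : F θ c < F θ (q α θ) := by rw [hqd.2]; exact hlt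
          exact ((hFmono θ hθ).lt_iff_lt ⟨hcD, hc⟩ hqd.1).1 this
        · filter_upwards [hIooU] with θ hθ
          exact lt_of_le_of_lt (not_lt.1 hcD) (hq α ⟨hα0, hα1⟩ θ hθ).1.1
      · intro c hc
        filter_upwards [hIooU] with θ hθ
        exact lt_trans (hq α ⟨hα0, hα1⟩ θ hθ).1.2 hc
  · intro hQ d hd
    have key1 : Tendsto (fun θ => F θ d) (𝓝[>] θl) (𝓝 1) := by
      rw [tendsto_order]
      constructor
      · intro c hc
        by_cases hc0 : 0 ≤ c
        · set α := (1 - c) / 2 with hαdef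
          have hαIoo : α ∈ Ioo (0:ℝ) 1 := ⟨by simp [hαdef]; linarith, by simp [hαdef]; linarith⟩
          have h2 : ∀ᶠ θ in 𝓝[>] θl, q α θ < d :=
            (hQ α hαIoo).1.eventually_lt_const hd.1
          filter_upwards [hIooL, h2] with θ hθ hlt
          have hqd := hq α hαIoo θ hθ
          have : F θ (q α θ) < F θ d := (hFmono θ hθ) hqd.1 hd hlt
          rw [hqd.2] at this
          calc c < 1 - α := by rw [hαdef]; linarith
            _ < F θ d := this
        · filter_upwards [hIooL] with θ hθ
          exact lt_of_lt_of_le (not_le.1 hc0) (hFrange θ hθ d hd).1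
      · intro c hc
        filter_upwards [hIooL] with θ hθ
        exact lt_of_le_of_lt (hFrange θ hθ d hd).2 hc
    have key2 : Tendsto (fun θ => F θ d) (𝓝[<] θu) (𝓝 0) := by
      rw [tendsto_order]
      constructor
      · intro c hc
        filter_upwards [hIooU] with θ hθ
        exact lt_of_lt_of_le hc (hFrange θ hθ d hd).1
      · intro c hc
        by_cases hc1 : c ≤ 1
        · set α := 1 - c / 2 with hαdef
          have hαIoo : α ∈ Ioo (0:ℝ) 1 := ⟨by simp [hαdef]; linarith, by simp [hαdef]; linarith⟩
          have h2 : ∀ᶠ θ in 𝓝[<] θu, d < q α θ :=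
            (hQ α hαIoo).2.eventually_const_lt hd.2
          filter_upwards [hIooU, h2] with θ hθ hlt
          have hqd := hq α hαIoo θ hθ
          have : F θ d < F θ (q α θ) := (hFmono θ hθ) hd hqd.1 hlt
          rw [hqd.2] at this
          calc F θ d < 1 - α := this
            _ ≤ c := by rw [hαdef]; linarith
        · filter_upwards [hIooU] with θ hθ
          exact lt_of_le_of_lt (hFrange θ hθ d hd).2 (not_le.1 hc1)
    constructor
    · have := (tendsto_const_nhds (x := (1:ℝ)) (f := 𝓝[>] θl)).sub key1
      simpa using this
    · have := (tendsto_const_nhds (x := (1:ℝ)) (f := 𝓝[<] θu)).sub key2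
      simpa using this
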